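/- A finite graph G satisfies the first-order sentence φ (asserting: there exists a vertex x of degree at least 1 such that every vertex z ≠ x at distance at most 2 from x is adjacent to x and has exactly two neighbours other than x) if and only if some connected component of G is a bouquet of cycles, i.e., G contains a bouquet of cycles as a free induced subgraph. -/

import Mathlib

/-- The bouquet of cycles of type `(len 0, …, len (k-1))`: the disjoint union of cycles of
lengths `len i` (vertices `some ⟨i, x⟩`, with `x : ZMod (len i)`) together with an apex
vertex `none` adjacent to every cycle vertex. -/
def bouquet (k : ℕ) (len : Fin k → ℕ) :
    SimpleGraph (Option (Σ i : Fin k, ZMod (len i))) :=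
  SimpleGraph.fromRel (fun u v =>
    match u, v with
    | none, some _ => True
    | some x, some y => ∃ h : x.1 = y.1, (h ▸ x.2) + 1 = y.2
    | _, _ => False)

/-- The first-order condition `φ`: there is a vertex `x` of degree at least `1` such that
every vertex `z ≠ x` at distance at most `2` from `x` is adjacent to `x` and has exactly
two neighbours other than `x`. -/
def phiCond {V : Type} (G : SimpleGraph V) : Prop :=
  ∃ x y, G.Adj x y ∧ ∀ z, z ≠ x → (G.Adj x z ∨ ∃ w, G.Adj x w ∧ G.Adj w z) →
    G.Adj x z ∧ ∃ u v, u ≠ v ∧ u ≠ x ∧ v ≠ x ∧ G.Adj z u ∧ G.Adj z v ∧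
      ∀ w, G.Adj z w → w = u ∨ w = v ∨ w = x

namespace BouquetAux
open SimpleGraph Function

variable {W : Type} {G : SimpleGraph W}

/-- Every vertex has exactly two neighbours. -/
def TwoReg (G : SimpleGraph W) : Prop :=
  ∀ z : W, ∃ u v, u ≠ v ∧ G.Adj z u ∧ G.Adj z v ∧ ∀ w, G.Adj z w → w = u ∨ w = v

lemma exists_other (h : TwoReg G) {z w : W} (hzw : G.Adj z w) :
    ∃ w', G.Adj z w' ∧ w' ≠ w ∧ ∀ w'', G.Adj z w'' → w'' ≠ w → w'' = w' := by
  obtain ⟨u, v, huv, hu, hv, hall⟩ := h z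
  rcases hall w hzw with rfl | rfl
  · exact ⟨v, hv, fun e => huv e.symm, fun w'' h1 h2 => (hall w'' h1).resolve_left h2⟩
  · exact ⟨u, hu, huv, fun w'' h1 h2 => (hall w'' h1).resolve_right h2⟩

-- The neighbour of `z` other than `w`.
open Classical in
noncomputable def other (h : TwoReg G) (z w : W) : W :=
  if hzw : G.Adj z w then (exists_other h hzw).choose else z

lemma other_adj (h : TwoReg G) {z w : W} (hzw : G.Adj z w) : G.Adj z (other h z w) := by
  classical
  simp only [other, dif_pos hzw]; exact (exists_other h hzw).choose_spec.1

lemma other_ne (h : TwoReg G) {z w : W} (hzw : G.Adj z w) : other h z w ≠ w := by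
  classical
  simp only [other, dif_pos hzw]; exact (exists_other h hzw).choose_spec.2.1

lemma other_uniq (h : TwoReg G) {z w w'' : W} (hzw : G.Adj z w) (h1 : G.Adj z w'')
    (h2 : w'' ≠ w) : w'' = other h z w := by
  classical
  simp only [other, dif_pos hzw]; exact (exists_other h hzw).choose_spec.2.2 w'' h1 h2

lemma other_other (h : TwoReg G) {z w : W} (hzw : G.Adj z w) :
    other h z (other h z w) = w :=
  ((other_uniq h (other_adj h hzw) hzw (Ne.symm (other_ne h hzw)))).symm

/-- The successor dart: walk one step along the 2-regular graph. -/
noncomputable def nxt (h : TwoReg G) (d : G.Dart) : G.Dart :=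
  ⟨(d.snd, other h d.snd d.fst), other_adj h d.adj.symm⟩

@[simp] lemma nxt_fst (h : TwoReg G) (d : G.Dart) : (nxt h d).fst = d.snd := rfl

lemma nxt_snd (h : TwoReg G) (d : G.Dart) : (nxt h d).snd = other h d.snd d.fst := rfl

lemma nxt_inj (h : TwoReg G) : Injective (nxt h) := by
  intro d d' he
  have h2 : d.snd = d'.snd := congrArg (fun d : G.Dart => d.fst) he
  have h3 : other h d.snd d.fst = other h d'.snd d'.fst := congrArg (fun d : G.Dart => d.snd) he
  apply Dart.ext
  have : d.fst = d'.fst := by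
    have := other_other h d.adj.symm
    rw [h3, h2] at this
    rw [← this, other_other h d'.adj.symm]
  exact Prod.ext this h2

lemma nxt_symm_nxt (h : TwoReg G) (d : G.Dart) : nxt h (nxt h d).symm = d.symm := by
  apply Dart.ext
  have h1 : (nxt h (nxt h d).symm).toProd
      = (d.snd, other h d.snd (other h d.snd d.fst)) := rfl
  rw [h1, other_other h d.adj.symm, Dart.symm_toProd]
  rfl

lemma iter_symm (h : TwoReg G) : ∀ (m : ℕ) (d : G.Dart),
    (nxt h)^[m] ((nxt h)^[m] d).symm = d.symm := by
  intro m
  induction m with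
  | zero => intro d; rfl
  | succ m ih =>
      intro d
      have e1 : (nxt h)^[m+1] d = nxt h ((nxt h)^[m] d) := Function.iterate_succ_apply' _ _ _
      have e2 : (nxt h)^[m+1] ((nxt h)^[m+1] d).symm
          = (nxt h)^[m] (nxt h ((nxt h)^[m+1] d).symm) := Function.iterate_succ_apply _ _ _
      rw [e2, e1, nxt_symm_nxt h, ih]

lemma iter_ne_symm (h : TwoReg G) : ∀ (n : ℕ) (d : G.Dart), (nxt h)^[n] d ≠ d.symm := by
  intro n
  induction n using Nat.strong_induction_on with
  | _ n ih =>
    match n with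
    | 0 =>
        intro d hd
        have : d.fst = d.snd := by
          have := congrArg (fun d : G.Dart => d.fst) hd
          simpa using this
        exact d.adj.ne this
    | 1 =>
        intro d hd
        have : other h d.snd d.fst = d.fst := by
          have := congrArg (fun d : G.Dart => d.snd) hd
          simpa [nxt_snd] using this
        exact other_ne h d.adj.symm this
    | (m+2) =>
        intro d hd
        have e1 : (nxt h)^[m+2] d = nxt h ((nxt h)^[m+1] d) := Function.iterate_succ_apply' _ _ _
        have e2 : nxt h ((nxt h d).symm) = d.symm := nxt_symm_nxt h d
        rw [e1, ← e2] at hd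
        have h3 : (nxt h)^[m+1] d = (nxt h d).symm := nxt_inj h hd
        have h4 : (nxt h)^[m] (nxt h d) = (nxt h d).symm := by
          rw [← Function.iterate_succ_apply]; exact h3
        exact ih m (by omega) (nxt h d) h4

lemma iter_fst_inj (h : TwoReg G) (d : G.Dart) (i j : ℕ)
    (hfst : ((nxt h)^[i] d).fst = ((nxt h)^[j] d).fst) :
    (nxt h)^[i] d = (nxt h)^[j] d := by
  set e := (nxt h)^[i] d with he
  set e' := (nxt h)^[j] d with he'
  by_cases hsnd : e.snd = e'.snd
  · exact Dart.ext _ _ (Prod.ext hfst hsnd)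
  · exfalso
    by_cases hij : i = j
    · subst hij; exact hsnd rfl
    -- `e' = nxt h e.symm`
    have key : nxt h e.symm = e' := by
      apply Dart.ext
      have h1 : (nxt h e.symm).toProd = (e.fst, other h e.fst e.snd) := rfl
      rw [h1]
      have h2 : e'.snd = other h e.fst e.snd := by
        apply other_uniq h e.adj
        · have := e'.adj; rw [← hfst] at this; exact this
        · exact fun hc => hsnd hc.symm
      exact Prod.ext hfst h2.symm
    -- apply `(nxt h)^[i]` to both sides
    have h5 : (nxt h)^[i] (nxt h e.symm) = (nxt h)^[i] e' := congrArg _ key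
    have h6 : (nxt h)^[i] (nxt h e.symm) = nxt h ((nxt h)^[i] e.symm) := by
      rw [← Function.iterate_succ_apply, Function.iterate_succ_apply']
    have h7 : (nxt h)^[i] e.symm = d.symm := iter_symm h i d
    have h8 : (nxt h)^[i] e' = (nxt h)^[i+j] d := by
      rw [he', ← Function.iterate_add_apply]
    rw [h6, h7, h8] at h5
    -- h5 : nxt h d.symm = (nxt h)^[i+j] d
    have hij1 : 1 ≤ i + j := by omega
    obtain ⟨m, hm⟩ : ∃ m, i + j = m + 1 := ⟨i + j - 1, by omega⟩
    rw [hm, Function.iterate_succ_apply'] at h5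
    have h9 : d.symm = (nxt h)^[m] d := nxt_inj h h5
    exact iter_ne_symm h m d h9.symm



section Fin
variable [Finite W]

lemma isPeriodic (h : TwoReg G) (d : G.Dart) : ∃ n, 0 < n ∧ (nxt h)^[n] d = d := by
  classical
  haveI : Finite G.Dart := Finite.of_injective Dart.toProd (fun a b hab => Dart.ext a b hab)
  haveI := Fintype.ofFinite G.Dart
  have hbij : Bijective (nxt h) := (Finite.injective_iff_bijective).mp (nxt_inj h)
  let π : Equiv.Perm G.Dart := Equiv.ofBijective _ hbij
  refine ⟨orderOf π, orderOf_pos π, ?_⟩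
  show (⇑π)^[orderOf π] d = d
  rw [Equiv.Perm.iterate_eq_pow, pow_orderOf_eq_one]
  rfl

lemma mp_pos (h : TwoReg G) (d : G.Dart) : 0 < minimalPeriod (nxt h) d := by
  obtain ⟨n, hn, hp⟩ := isPeriodic h d
  exact Function.IsPeriodicPt.minimalPeriod_pos hn hp

lemma mp_ge3 (h : TwoReg G) (d : G.Dart) : 3 ≤ minimalPeriod (nxt h) d := by
  by_contra hlt
  push_neg at hlt
  have hpos := mp_pos h d
  have hiter := Function.iterate_minimalPeriod (f := nxt h) (x := d)
  have hn : minimalPeriod (nxt h) d = 1 ∨ minimalPeriod (nxt h) d = 2 := by omega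
  rcases hn with hn | hn
  · rw [hn] at hiter
    have : d.snd = d.fst := congrArg (fun e : G.Dart => e.fst) hiter
    exact d.adj.ne this.symm
  · rw [hn] at hiter
    have h2 : (nxt h)^[2] d = nxt h (nxt h d) := rfl
    rw [h2] at hiter
    have : other h d.snd d.fst = d.fst := congrArg (fun e : G.Dart => e.fst) hiter
    exact other_ne h d.adj.symm this

/-- The cycle through the dart `d`, as a map from `ZMod (period)`. -/
noncomputable def cmap (h : TwoReg G) (d : G.Dart)
    (m : ZMod (minimalPeriod (nxt h) d)) : W :=
  ((nxt h)^[m.val] d).fst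

lemma cmap_inj (h : TwoReg G) (d : G.Dart) : Injective (cmap h d) := by
  haveI : NeZero (minimalPeriod (nxt h) d) := ⟨(mp_pos h d).ne'⟩
  intro m m' he
  have hd : (nxt h)^[m.val] d = (nxt h)^[m'.val] d := iter_fst_inj h d _ _ he
  have := Function.iterate_injOn_Iio_minimalPeriod (f := nxt h) (x := d)
    (Set.mem_Iio.mpr (ZMod.val_lt m)) (Set.mem_Iio.mpr (ZMod.val_lt m')) hd
  exact ZMod.val_injective _ this

lemma dart_succ (h : TwoReg G) (d : G.Dart) (m : ZMod (minimalPeriod (nxt h) d)) :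
    (nxt h)^[(m+1).val] d = nxt h ((nxt h)^[m.val] d) := by
  haveI : NeZero (minimalPeriod (nxt h) d) := ⟨(mp_pos h d).ne'⟩
  haveI : Fact (1 < minimalPeriod (nxt h) d) := ⟨by have := mp_ge3 h d; omega⟩
  have h1 : (m+1).val = (m.val + 1) % minimalPeriod (nxt h) d := by
    rw [ZMod.val_add, ZMod.val_one]
  rw [h1, Function.iterate_mod_minimalPeriod_eq, Function.iterate_succ_apply']

lemma cmap_succ (h : TwoReg G) (d : G.Dart) (m : ZMod (minimalPeriod (nxt h) d)) :
    cmap h d (m+1) = ((nxt h)^[m.val] d).snd := by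
  rw [cmap, dart_succ]; rfl

lemma cmap_adj (h : TwoReg G) (d : G.Dart) (m : ZMod (minimalPeriod (nxt h) d)) :
    G.Adj (cmap h d m) (cmap h d (m+1)) := by
  rw [cmap_succ]
  exact ((nxt h)^[m.val] d).adj

lemma cmap_nbr (h : TwoReg G) (d : G.Dart) (m : ZMod (minimalPeriod (nxt h) d))
    (w : W) (hw : G.Adj (cmap h d m) w) :
    w = cmap h d (m+1) ∨ w = cmap h d (m-1) := by
  set e := (nxt h)^[m.val] d with hedef
  set e' := (nxt h)^[(m-1).val] d with he'def
  have hb : cmap h d (m+1) = e.snd := cmap_succ h d m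
  have ha' : cmap h d (m-1) = e'.fst := rfl
  have hmm : m - 1 + 1 = m := by ring
  have he'snd : e'.snd = e.fst := by
    have := cmap_succ h d (m-1)
    rw [hmm] at this
    exact this.symm
  have he : e = nxt h e' := by
    have := dart_succ h d (m-1)
    rw [hmm] at this
    exact this
  have hadj_aa' : G.Adj e.fst e'.fst := by
    have := e'.adj
    rw [he'snd] at this
    exact this.symm
  have hsnd : e.snd = other h e.fst e'.fst := by
    conv_lhs => rw [he, nxt_snd]
    rw [he'snd]
  have hsne : e.snd ≠ e'.fst := by
    rw [hsnd]; exact other_ne h hadj_aa'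
  have hwa : G.Adj e.fst w := hw
  have hadj_ab : G.Adj e.fst e.snd := e.adj
  rw [hb, ha']
  obtain ⟨u, v, huv, hu, hv, hall⟩ := h e.fst
  rcases hall w hwa with rfl | rfl <;>
    rcases hall e.snd hadj_ab with h1 | h1 <;>
      rcases hall e'.fst hadj_aa' with h2 | h2 <;>
        first
          | tauto
          | exact absurd (h1.trans h2.symm) hsne

lemma reach_ind {u v : W} (P : W → Prop) (hu : P u)
    (step : ∀ a b, P a → G.Adj a b → P b) (h : G.Reachable u v) : P v := by
  obtain ⟨w⟩ := h
  induction w with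
  | nil => exact hu
  | @cons a b c hab p ih => exact ih (step _ _ hu hab)

lemma reach_cmap (h : TwoReg G) (d : G.Dart) (m : ZMod (minimalPeriod (nxt h) d)) :
    G.Reachable d.fst (cmap h d m) := by
  show G.Reachable d.fst ((nxt h)^[m.val] d).fst
  generalize m.val = i
  induction i with
  | zero => exact Reachable.refl _
  | succ i ih =>
      rw [Function.iterate_succ_apply']
      exact ih.trans ((nxt h)^[i] d).adj.reachable

lemma cmap_surj_on_component (h : TwoReg G) (d : G.Dart) (w : W)
    (hw : G.Reachable d.fst w) : ∃ m, cmap h d m = w := by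
  haveI : NeZero (minimalPeriod (nxt h) d) := ⟨(mp_pos h d).ne'⟩
  refine reach_ind (fun z => ∃ m, cmap h d m = z) ⟨0, ?_⟩ ?_ hw
  · show ((nxt h)^[(0 : ZMod _).val] d).fst = d.fst
    rw [ZMod.val_zero]
    rfl
  · rintro a b ⟨m, rfl⟩ hab
    rcases cmap_nbr h d m b hab with hb | hb
    · exact ⟨m+1, hb.symm⟩
    · exact ⟨m-1, hb.symm⟩

end Fin

/-- Decomposition of a finite 2-regular graph into cycles. -/
lemma twoReg_decomp {W : Type} [Finite W] (G : SimpleGraph W) (h : TwoReg G) :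
    ∃ (k : ℕ) (len : Fin k → ℕ), (∀ i, 3 ≤ len i) ∧
      ∃ F : (Σ i : Fin k, ZMod (len i)) ≃ W,
        ∀ p q, G.Adj (F p) (F q) ↔
          (((∃ h' : p.1 = q.1, (h' ▸ p.2) + 1 = q.2) ∨
            (∃ h' : q.1 = p.1, (h' ▸ q.2) + 1 = p.2)) ∧ p ≠ q) := by
  classical
  haveI : Fintype G.ConnectedComponent := Fintype.ofFinite _
  set k := Fintype.card G.ConnectedComponent with hk
  set ec : Fin k ≃ G.ConnectedComponent := (Fintype.equivFin _).symm with hec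
  have dart0 : ∀ c : G.ConnectedComponent, {d : G.Dart // d.fst = c.out} := fun c =>
    ⟨⟨(c.out, (h c.out).choose), (h c.out).choose_spec.choose_spec.2.1⟩, rfl⟩
  set D : G.ConnectedComponent → G.Dart := fun c => (dart0 c).1 with hDdef
  have hD : ∀ c, (D c).fst = c.out := fun c => (dart0 c).2
  refine ⟨k, fun i => minimalPeriod (nxt h) (D (ec i)), fun i => mp_ge3 h _, ?_⟩
  set len : Fin k → ℕ := fun i => minimalPeriod (nxt h) (D (ec i)) with hlen
  set Fm : (Σ i : Fin k, ZMod (len i)) → W := fun p => cmap h (D (ec p.1)) p.2 with hFm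
  have hcomp : ∀ p, G.connectedComponentMk (Fm p) = ec p.1 := by
    intro p
    have h1 : G.Reachable (D (ec p.1)).fst (Fm p) := reach_cmap h _ _
    rw [← (ConnectedComponent.sound h1), hD]
    exact Quot.out_eq _
  have hinj : Injective Fm := by
    rintro ⟨i, m⟩ ⟨j, m'⟩ he
    have h1 : ec i = ec j := by
      rw [← hcomp ⟨i, m⟩, ← hcomp ⟨j, m'⟩, he]
    have h2 : i = j := ec.injective h1
    subst h2
    have h3 : m = m' := cmap_inj h _ he
    rw [h3]
  have hsurj : Surjective Fm := by
    intro w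
    set c := G.connectedComponentMk w with hc
    set i := ec.symm c with hi
    have h1 : G.Reachable (D (ec i)).fst w := by
      apply ConnectedComponent.exact
      rw [hD]
      have hoe : G.connectedComponentMk (Quot.out (ec i)) = ec i := Quot.out_eq _
      rw [hoe, hi, Equiv.apply_symm_apply]
    obtain ⟨m, hm⟩ := cmap_surj_on_component h _ w h1
    exact ⟨⟨i, m⟩, hm⟩
  refine ⟨Equiv.ofBijective Fm ⟨hinj, hsurj⟩, ?_⟩
  have hcoe : ∀ p, Equiv.ofBijective Fm ⟨hinj, hsurj⟩ p = Fm p := fun _ => rfl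
  rintro ⟨i, m⟩ ⟨j, m'⟩
  rw [hcoe, hcoe]
  constructor
  · intro hadj
    have h1 : i = j := by
      apply ec.injective
      rw [← hcomp ⟨i, m⟩, ← hcomp ⟨j, m'⟩]
      exact ConnectedComponent.sound hadj.reachable
    subst h1
    have hne : (⟨i, m⟩ : Σ i : Fin k, ZMod (len i)) ≠ ⟨i, m'⟩ := by
      intro hc
      exact hadj.ne (congrArg Fm hc)
    rcases cmap_nbr h _ m _ hadj with hb | hb
    · have hm' : m' = m + 1 := cmap_inj h _ hb
      exact ⟨Or.inl ⟨rfl, hm'.symm⟩, hne⟩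
    · have hm' : m' = m - 1 := cmap_inj h _ hb
      refine ⟨Or.inr ⟨rfl, ?_⟩, hne⟩
      show m' + 1 = m
      rw [hm']
      ring
  · rintro ⟨hrel | hrel, hne⟩
    · obtain ⟨h', he⟩ := hrel
      have h'' : i = j := h'
      subst h''
      have he' : m + 1 = m' := he
      rw [← he']
      exact cmap_adj h _ m
    · obtain ⟨h', he⟩ := hrel
      have h'' : j = i := h'
      subst h''
      have he' : m' + 1 = m := he
      rw [← he']
      exact (cmap_adj h _ m').symm



lemma zmod_dvd_of_eq_zero {n a : ℕ} (hn : 3 ≤ n) (h : ((a : ℕ) : ZMod n) = 0) : n ∣ a := by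
  haveI : NeZero n := ⟨by omega⟩
  exact (ZMod.natCast_eq_zero_iff a n).mp h

lemma zmod_add_one_ne {n : ℕ} (hn : 3 ≤ n) (m : ZMod n) : m + 1 ≠ m := by
  intro hc
  have h1 : ((1 : ℕ) : ZMod n) = 0 := by push_cast; linear_combination hc
  have h2 := Nat.le_of_dvd one_pos (zmod_dvd_of_eq_zero hn h1)
  omega

lemma zmod_sub_one_ne {n : ℕ} (hn : 3 ≤ n) (m : ZMod n) : m - 1 ≠ m := by
  intro hc
  have h1 : ((1 : ℕ) : ZMod n) = 0 := by push_cast; linear_combination -hc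
  have h2 := Nat.le_of_dvd one_pos (zmod_dvd_of_eq_zero hn h1)
  omega

lemma zmod_succ_ne_pred {n : ℕ} (hn : 3 ≤ n) (m : ZMod n) : m + 1 ≠ m - 1 := by
  intro hc
  have h1 : ((2 : ℕ) : ZMod n) = 0 := by push_cast; linear_combination hc
  have h2 := Nat.le_of_dvd two_pos (zmod_dvd_of_eq_zero hn h1)
  omega



section Bouquet
variable {k : ℕ} {len : Fin k → ℕ}

lemma bouquet_adj_none (p : Σ i : Fin k, ZMod (len i)) :
    (bouquet k len).Adj none (some p) := by
  rw [bouquet, SimpleGraph.fromRel_adj]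
  exact ⟨by simp, Or.inl trivial⟩

lemma bouquet_adj_succ (hlen : ∀ i, 3 ≤ len i) (i : Fin k) (m : ZMod (len i)) :
    (bouquet k len).Adj (some ⟨i, m⟩) (some ⟨i, m + 1⟩) := by
  rw [bouquet, SimpleGraph.fromRel_adj]
  refine ⟨?_, Or.inl ⟨rfl, rfl⟩⟩
  intro hc
  have hc2 := Option.some.inj hc
  injection hc2 with h1 h2
  exact zmod_add_one_ne (hlen i) m h2.symm

lemma bouquet_adj_pred (hlen : ∀ i, 3 ≤ len i) (i : Fin k) (m : ZMod (len i)) :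
    (bouquet k len).Adj (some ⟨i, m⟩) (some ⟨i, m - 1⟩) := by
  rw [bouquet, SimpleGraph.fromRel_adj]
  refine ⟨?_, Or.inr ⟨rfl, by ring⟩⟩
  intro hc
  have hc2 := Option.some.inj hc
  injection hc2 with h1 h2
  exact zmod_sub_one_ne (hlen i) m h2.symm

lemma bouquet_adj_some (hlen : ∀ i, 3 ≤ len i) (i : Fin k) (m : ZMod (len i))
    (w : Option (Σ i : Fin k, ZMod (len i))) :
    (bouquet k len).Adj (some ⟨i, m⟩) w ↔
      w = none ∨ w = some ⟨i, m + 1⟩ ∨ w = some ⟨i, m - 1⟩ := by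
  constructor
  · intro hadj2
    cases w with
    | none => exact Or.inl rfl
    | some q =>
        obtain ⟨j, m'⟩ := q
        rw [bouquet, SimpleGraph.fromRel_adj] at hadj2
        obtain ⟨hne, hrel | hrel⟩ := hadj2
        · obtain ⟨h', he⟩ := hrel
          have h'' : i = j := h'
          subst h''
          have he' : m + 1 = m' := he
          right; left; rw [← he']
        · obtain ⟨h', he⟩ := hrel
          have h'' : j = i := h'
          subst h''
          have he' : m' + 1 = m := he
          have hm' : m' = m - 1 := by linear_combination he'
          right; right; rw [hm']
  · rintro (rfl | rfl | rfl)
    · exact (bouquet_adj_none _).symm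
    · exact bouquet_adj_succ hlen i m
    · exact bouquet_adj_pred hlen i m

lemma bouquet_adj_some_some (p q : Σ i : Fin k, ZMod (len i)) :
    (bouquet k len).Adj (some p) (some q) ↔
      (((∃ h' : p.1 = q.1, (h' ▸ p.2) + 1 = q.2) ∨
        (∃ h' : q.1 = p.1, (h' ▸ q.2) + 1 = p.2)) ∧ p ≠ q) := by
  rw [bouquet, SimpleGraph.fromRel_adj]
  constructor
  · rintro ⟨hne, hrel⟩
    exact ⟨hrel, fun hc => hne (by rw [hc])⟩
  · rintro ⟨hrel, hne⟩
    exact ⟨fun hc => hne (Option.some.inj hc), hrel⟩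

end Bouquet

end BouquetAux

open BouquetAux

/-- A finite graph `G` satisfies `φ` if, and only if, `G` contains a
bouquet of cycles as a free induced subgraph (i.e. an induced subgraph with no edges to
the rest of `G`, isomorphic to a bouquet of cycles). -/
theorem phi_iff_free_induced_bouquet {V : Type} [Fintype V] (G : SimpleGraph V) :
    phiCond G ↔
      ∃ (k : ℕ) (len : Fin k → ℕ), 1 ≤ k ∧ (∀ i, 3 ≤ len i) ∧
        ∃ S : Set V, (∀ u ∈ S, ∀ v, v ∉ S → ¬ G.Adj u v) ∧
          Nonempty (G.induce S ≃g bouquet k len) := by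
  constructor
  · rintro ⟨x, y, hxy, H⟩
    set N : Set V := {z | G.Adj x z} with hN
    have hyN : y ∈ N := hxy
    have hmemN : ∀ z ∈ N, ∀ u, G.Adj z u → u ≠ x → u ∈ N := by
      intro z hz u hzu hux
      exact (H u hux (Or.inr ⟨z, hz, hzu⟩)).1
    have h2reg : TwoReg (G.induce N) := by
      rintro ⟨z, hz⟩
      have hzx : z ≠ x := (hz : G.Adj x z).ne'
      obtain ⟨-, u, v, huv, hux, hvx, hzu, hzv, hall⟩ := H z hzx (Or.inl hz)
      have huN : u ∈ N := hmemN z hz u hzu hux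
      have hvN : v ∈ N := hmemN z hz v hzv hvx
      refine ⟨⟨u, huN⟩, ⟨v, hvN⟩, ?_, hzu, hzv, ?_⟩
      · intro hc; exact huv (congrArg Subtype.val hc)
      · rintro ⟨w, hw⟩ haw
        rcases hall w haw with rfl | rfl | hwx
        · left; rfl
        · right; rfl
        · rw [hwx] at hw
          exact absurd hw (G.loopless.irrefl x)
    obtain ⟨k, len, hlen3, F, hF⟩ := twoReg_decomp (G.induce N) h2reg
    have hk : 1 ≤ k := (F.symm ⟨y, hyN⟩).1.pos
    have hxnotN : x ∉ N := fun hc => G.loopless.irrefl x hc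
    refine ⟨k, len, hk, hlen3, insert x N, ?_, ?_⟩
    · intro u hu v hv hadj
      apply hv
      rcases Set.mem_insert_iff.mp hu with rfl | huN
      · exact Set.mem_insert_of_mem _ hadj
      · by_cases hvx : v = x
        · rw [hvx]; exact Set.mem_insert _ _
        · exact Set.mem_insert_of_mem _ (hmemN u huN v hadj hvx)
    · let Φ : Option (Σ i : Fin k, ZMod (len i)) → ↥(insert x N) := fun o =>
        match o with
        | none => ⟨x, Set.mem_insert _ _⟩
        | some p => ⟨(F p).val, Set.mem_insert_of_mem _ (F p).prop⟩
      have hΦinj : Function.Injective Φ := by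
        rintro (_ | p) (_ | q) he
        · rfl
        · exfalso
          have h0 := congrArg Subtype.val he
          have hxe : x = (F q).val := h0
          exact hxnotN (hxe ▸ (F q).prop)
        · exfalso
          have h0 := congrArg Subtype.val he
          have hxe : x = (F p).val := h0.symm
          exact hxnotN (hxe ▸ (F p).prop)
        · have h0 := congrArg Subtype.val he
          have : F p = F q := Subtype.ext h0
          rw [F.injective this]
      have hΦsurj : Function.Surjective Φ := by
        rintro ⟨s, hs⟩
        rcases Set.mem_insert_iff.mp hs with rfl | hsN
        · exact ⟨none, rfl⟩
        · obtain ⟨p, hp⟩ := F.surjective ⟨s, hsN⟩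
          refine ⟨some p, ?_⟩
          apply Subtype.ext
          have h0 := congrArg Subtype.val hp
          exact h0
      refine ⟨SimpleGraph.Iso.symm ⟨Equiv.ofBijective Φ ⟨hΦinj, hΦsurj⟩, ?_⟩⟩
      intro a b
      show (G.induce (insert x N)).Adj (Φ a) (Φ b) ↔ (bouquet k len).Adj a b
      match a, b with
      | none, none =>
          exact iff_of_false (fun hc => G.loopless.irrefl x hc) ((bouquet k len).loopless.irrefl none)
      | none, some q =>
          exact iff_of_true ((F q).prop) (bouquet_adj_none q)
      | some p, none =>
          exact iff_of_true ((F p).prop).symm (bouquet_adj_none p).symm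
      | some p, some q =>
          exact (hF p q).trans (bouquet_adj_some_some p q).symm
  · rintro ⟨k, len, hk, hlen, S, hfree, ⟨e⟩⟩
    have mem_of_adj : ∀ {u v : V}, u ∈ S → G.Adj u v → v ∈ S := by
      intro u v hu ha
      by_contra hv
      exact hfree u hu v hv ha
    set x := (e.symm none).val with hx
    have hxS : x ∈ S := (e.symm none).prop
    let a0 : Σ i : Fin k, ZMod (len i) := ⟨⟨0, hk⟩, 0⟩
    refine ⟨x, (e.symm (some a0)).val, ?_, ?_⟩
    · exact e.symm.map_rel_iff.mpr (bouquet_adj_none a0)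
    · intro z hzx hreach
      have hzS : z ∈ S := by
        rcases hreach with hz | ⟨w, hw1, hw2⟩
        · exact mem_of_adj hxS hz
        · exact mem_of_adj (mem_of_adj hxS hw1) hw2
      cases he : e ⟨z, hzS⟩ with
      | none =>
          exfalso
          apply hzx
          have h1 : (⟨z, hzS⟩ : ↥S) = e.symm none := by
            rw [← he, RelIso.symm_apply_apply]
          exact congrArg Subtype.val h1
      | some a =>
          obtain ⟨i, m⟩ := a
          have hz_eq : (⟨z, hzS⟩ : ↥S) = e.symm (some ⟨i, m⟩) := by
            rw [← he, RelIso.symm_apply_apply]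
          constructor
          · have h1 := e.symm.map_rel_iff.mpr (bouquet_adj_none (⟨i, m⟩ : Σ i : Fin k, ZMod (len i)))
            rw [← hz_eq] at h1
            exact h1
          · refine ⟨(e.symm (some ⟨i, m + 1⟩)).val, (e.symm (some ⟨i, m - 1⟩)).val,
              ?_, ?_, ?_, ?_, ?_, ?_⟩
            · intro hc
              have h1 : e.symm (some ⟨i, m + 1⟩) = e.symm (some ⟨i, m - 1⟩) := Subtype.ext hc
              have h2 := Option.some.inj (e.symm.injective h1)
              injection h2 with h3 h4
              exact zmod_succ_ne_pred (hlen i) m h4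
            · intro hc
              have h1 : e.symm (some ⟨i, m + 1⟩) = e.symm none := Subtype.ext hc
              exact Option.some_ne_none _ (e.symm.injective h1)
            · intro hc
              have h1 : e.symm (some ⟨i, m - 1⟩) = e.symm none := Subtype.ext hc
              exact Option.some_ne_none _ (e.symm.injective h1)
            · have h1 := e.symm.map_rel_iff.mpr (bouquet_adj_succ hlen i m)
              rw [← hz_eq] at h1
              exact h1
            · have h1 := e.symm.map_rel_iff.mpr (bouquet_adj_pred hlen i m)
              rw [← hz_eq] at h1
              exact h1
            · intro w hzw
              have hwS : w ∈ S := mem_of_adj hzS hzw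
              have hadj : (G.induce S).Adj ⟨z, hzS⟩ ⟨w, hwS⟩ := hzw
              have hb : (bouquet k len).Adj (e ⟨z, hzS⟩) (e ⟨w, hwS⟩) := e.map_rel_iff.mpr hadj
              rw [he, bouquet_adj_some hlen i m] at hb
              rcases hb with hb | hb | hb
              · right; right
                have h1 : (⟨w, hwS⟩ : ↥S) = e.symm none := by
                  rw [← hb, RelIso.symm_apply_apply]
                exact congrArg Subtype.val h1
              · left
                have h1 : (⟨w, hwS⟩ : ↥S) = e.symm (some ⟨i, m + 1⟩) := by
                  rw [← hb, RelIso.symm_apply_apply]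
                exact congrArg Subtype.val h1
              · right; left
                have h1 : (⟨w, hwS⟩ : ↥S) = e.symm (some ⟨i, m - 1⟩) := by
                  rw [← hb, RelIso.symm_apply_apply]
                exact congrArg Subtype.val h1
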